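/- Let α, β > 0 and γ = 0, and let (u,f) be a twice continuously differentiable solution on (0,∞) of u'' = (αβ/2) f² u + u(u²−1)/r² and (r² f')' = β f u², with 0 < u(r) < 1 and 0 < f(r) < 1 for all r > 0, lim_{r→0} u(r) = 1, lim_{r→0} f(r) = 0, lim_{r→∞} u(r) = 0, lim_{r→∞} f(r) = 1, and finite energy. Then there exist constants C > 0 and R > 0 such that 1 − f(r) ≤ C/r for all r ≥ R; i.e. f(r) = 1 + O(1/r) as r → ∞. -/
import Mathlib


open MeasureTheory Filter Set Topology

noncomputable section

/-- The integrand of the `γ = 0` energy functional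
`I(u,f) = ∫₀^∞ [2 u'² + (1−u²)²/r² + α r² f'² + αβ f² u²] dr`. -/
def dmIntegrand0 (α β : ℝ) (u u' f f' : ℝ → ℝ) (r : ℝ) : ℝ :=
  2 * u' r ^ 2 + (1 - u r ^ 2) ^ 2 / r ^ 2
    + α * r ^ 2 * f' r ^ 2 + α * β * f r ^ 2 * u r ^ 2

/-- for a finite-energy solution in the `γ = 0` case,
`f(r) = 1 + O(1/r)` as `r → ∞`, i.e. `1 − f(r) ≤ C/r` for `r` large. -/
theorem f_decay_gamma_zero (α β : ℝ) (hα : 0 < α) (hβ : 0 < β)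
    (u u' f f' : ℝ → ℝ)
    (hode : ∀ r : ℝ, 0 < r →
      HasDerivAt u (u' r) r ∧ HasDerivAt f (f' r) r ∧
      HasDerivAt u' (α * β / 2 * f r ^ 2 * u r + u r * (u r ^ 2 - 1) / r ^ 2) r ∧
      HasDerivAt (fun s : ℝ => s ^ 2 * f' s) (β * f r * u r ^ 2) r)
    (hbounds : ∀ r : ℝ, 0 < r → 0 < u r ∧ u r < 1 ∧ 0 < f r ∧ f r < 1)
    (hu0 : Tendsto u (𝓝[>] (0 : ℝ)) (𝓝 1))
    (hf0 : Tendsto f (𝓝[>] (0 : ℝ)) (𝓝 0))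
    (huinf : Tendsto u atTop (𝓝 0))
    (hfinf : Tendsto f atTop (𝓝 1))
    (hfin : IntegrableOn (dmIntegrand0 α β u u' f f') (Ioi 0)) :
    ∃ C > (0 : ℝ), ∃ R > (0 : ℝ), ∀ r : ℝ, R ≤ r → 1 - f r ≤ C / r := by
  set I : ℝ → ℝ := dmIntegrand0 α β u u' f f' with hIdef
  have hInn : ∀ r : ℝ, 0 ≤ I r := by
    intro r
    have h1 : (0:ℝ) ≤ 2 * u' r ^ 2 := by positivity
    have h2 : (0:ℝ) ≤ (1 - u r ^ 2) ^ 2 / r ^ 2 := by positivity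
    have h3 : (0:ℝ) ≤ α * r ^ 2 * f' r ^ 2 := by positivity
    have h4 : (0:ℝ) ≤ α * β * f r ^ 2 * u r ^ 2 := by positivity
    simp only [hIdef, dmIntegrand0]; linarith
  -- choose R₀ with f ≥ 1/2 beyond R₀
  obtain ⟨R0, hR0⟩ : ∃ R0 : ℝ, ∀ ρ : ℝ, R0 ≤ ρ → (1:ℝ)/2 ≤ f ρ := by
    have := hfinf.eventually (eventually_ge_nhds (show (1:ℝ)/2 < 1 by norm_num))
    exact eventually_atTop.mp this
  set R : ℝ := max R0 1 with hRdef
  have hR1 : (1:ℝ) ≤ R := le_max_right _ _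
  have hRpos : (0:ℝ) < R := lt_of_lt_of_le one_pos hR1
  have hRhalf : ∀ ρ : ℝ, R ≤ ρ → (1:ℝ)/2 ≤ f ρ := fun ρ hρ =>
    hR0 ρ (le_trans (le_max_left _ _) hρ)
  set E : ℝ := ∫ r in Ioi (0:ℝ), I r with hEdef
  have hEnn : 0 ≤ E := setIntegral_nonneg measurableSet_Ioi fun r _ => hInn r
  set M : ℝ := R ^ 2 * f' R + 2 / α * E with hMdef
  -- continuity helpers
  have hcu : ∀ ρ : ℝ, 0 < ρ → ContinuousAt u ρ := fun ρ hρ => ((hode ρ hρ).1).continuousAt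
  have hcf : ∀ ρ : ℝ, 0 < ρ → ContinuousAt f ρ := fun ρ hρ => ((hode ρ hρ).2.1).continuousAt
  -- key bound : s² f'(s) ≤ M for s ≥ R
  have hkey : ∀ s : ℝ, R ≤ s → s ^ 2 * f' s ≤ M := by
    intro s hs
    have hpos : ∀ ρ : ℝ, ρ ∈ Icc R s → 0 < ρ := fun ρ hρ => lt_of_lt_of_le hRpos hρ.1
    have hcuOn : ContinuousOn u (Icc R s) := fun ρ hρ => (hcu ρ (hpos ρ hρ)).continuousWithinAt
    have hcfOn : ContinuousOn f (Icc R s) := fun ρ hρ => (hcf ρ (hpos ρ hρ)).continuousWithinAt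
    have hcont : ContinuousOn (fun ρ => β * f ρ * u ρ ^ 2) (Icc R s) :=
      (continuousOn_const.mul hcfOn).mul (hcuOn.pow 2)
    have hftc : ∫ ρ in R..s, β * f ρ * u ρ ^ 2 = s ^ 2 * f' s - R ^ 2 * f' R := by
      apply intervalIntegral.integral_eq_sub_of_hasDerivAt
      · intro ρ hρ
        rw [uIcc_of_le hs] at hρ
        exact (hode ρ (hpos ρ hρ)).2.2.2
      · exact ContinuousOn.intervalIntegrable (by rw [uIcc_of_le hs]; exact hcont)
    -- bound the integral by (2/α) E
    have hsub : Ioc R s ⊆ Ioi (0:ℝ) := fun ρ hρ => lt_trans hRpos hρ.1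
    have hint1 : IntegrableOn (fun ρ => β * f ρ * u ρ ^ 2) (Ioc R s) :=
      (hcont.integrableOn_compact isCompact_Icc).mono_set Ioc_subset_Icc_self
    have hint2 : IntegrableOn (fun ρ => 2 / α * I ρ) (Ioc R s) :=
      ((hfin.mono_set hsub).const_mul _)
    have hmono : ∫ ρ in Ioc R s, β * f ρ * u ρ ^ 2 ≤ ∫ ρ in Ioc R s, 2 / α * I ρ := by
      apply setIntegral_mono_on hint1 hint2 measurableSet_Ioc
      intro ρ hρ
      have hρpos : 0 < ρ := lt_trans hRpos hρ.1
      have hfρ : (1:ℝ)/2 ≤ f ρ := hRhalf ρ hρ.1.le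
      obtain ⟨hu1, hu2, hf1, hf2⟩ := hbounds ρ hρpos
      have h1 : (0:ℝ) ≤ 2 * u' ρ ^ 2 := by positivity
      have h2 : (0:ℝ) ≤ (1 - u ρ ^ 2) ^ 2 / ρ ^ 2 := by positivity
      have h3 : (0:ℝ) ≤ α * ρ ^ 2 * f' ρ ^ 2 := by positivity
      have hIρ : I ρ = 2 * u' ρ ^ 2 + (1 - u ρ ^ 2) ^ 2 / ρ ^ 2
          + α * ρ ^ 2 * f' ρ ^ 2 + α * β * f ρ ^ 2 * u ρ ^ 2 := rfl
      rw [hIρ, div_mul_eq_mul_div, le_div_iff₀ hα]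
      have hprod : 0 ≤ α * β * f ρ * u ρ ^ 2 * (2 * f ρ - 1) := by
        have : (0:ℝ) ≤ 2 * f ρ - 1 := by linarith
        positivity
      nlinarith [hprod, h1, h2, h3]
    have hmono2 : ∫ ρ in Ioc R s, I ρ ≤ E := by
      apply setIntegral_mono_set hfin
      · exact Eventually.of_forall fun ρ => hInn ρ
      · exact HasSubset.Subset.eventuallyLE hsub
    have h2α : (0:ℝ) ≤ 2 / α := by positivity
    have : ∫ ρ in R..s, β * f ρ * u ρ ^ 2 ≤ 2 / α * E := by
      rw [intervalIntegral.integral_of_le hs]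
      calc ∫ ρ in Ioc R s, β * f ρ * u ρ ^ 2 ≤ ∫ ρ in Ioc R s, 2 / α * I ρ := hmono
        _ = 2 / α * ∫ ρ in Ioc R s, I ρ := by rw [integral_const_mul]
        _ ≤ 2 / α * E := mul_le_mul_of_nonneg_left hmono2 h2α
    rw [hftc] at this
    simp only [hMdef]; linarith
  -- comparison function φ(ρ) = f(ρ) + M/ρ is antitone on [R,∞)
  set φ : ℝ → ℝ := fun ρ => f ρ + M * ρ⁻¹ with hφdef
  have hφderiv : ∀ ρ : ℝ, 0 < ρ → HasDerivAt φ (f' ρ + M * (-(ρ ^ 2)⁻¹)) ρ := by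
    intro ρ hρ
    exact ((hode ρ hρ).2.1).add ((hasDerivAt_inv (ne_of_gt hρ)).const_mul M)
  have hanti : AntitoneOn φ (Ici R) := by
    apply antitoneOn_of_deriv_nonpos (convex_Ici R)
    · intro ρ hρ
      exact (hφderiv ρ (lt_of_lt_of_le hRpos hρ)).continuousAt.continuousWithinAt
    · intro ρ hρ
      rw [interior_Ici] at hρ
      exact (hφderiv ρ (lt_trans hRpos hρ)).differentiableAt.differentiableWithinAt
    · intro ρ hρ
      rw [interior_Ici] at hρ
      have hρpos : 0 < ρ := lt_trans hRpos hρ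
      rw [(hφderiv ρ hρpos).deriv]
      have := hkey ρ (le_of_lt hρ)
      have hρ2 : (0:ℝ) < ρ ^ 2 := by positivity
      have : f' ρ ≤ M * (ρ ^ 2)⁻¹ := by
        rw [← div_eq_mul_inv, le_div_iff₀ hρ2]
        nlinarith [hkey ρ (le_of_lt hρ)]
      linarith
  have hφlim : Tendsto φ atTop (𝓝 1) := by
    show Tendsto (fun ρ => f ρ + M * ρ⁻¹) atTop (𝓝 1)
    have h0 : Tendsto (fun ρ : ℝ => f ρ + M * ρ⁻¹) atTop (𝓝 (1 + M * 0)) :=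
      hfinf.add (tendsto_inv_atTop_zero.const_mul M)
    simpa using h0
  refine ⟨max M 1, lt_of_lt_of_le one_pos (le_max_right _ _), R, hRpos, fun r hr => ?_⟩
  have hrpos : 0 < r := lt_of_lt_of_le hRpos hr
  have h1φ : 1 ≤ φ r := by
    apply le_of_tendsto hφlim
    rw [eventually_atTop]
    exact ⟨r, fun b hb => hanti (mem_Ici.mpr hr) (mem_Ici.mpr (le_trans hr hb)) hb⟩
  have : 1 - f r ≤ M / r := by
    rw [div_eq_mul_inv]; simp only [hφdef] at h1φ; linarith
  calc 1 - f r ≤ M / r := this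
    _ ≤ max M 1 / r := by gcongr; exact le_max_left _ _
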